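/- Let 0 < b < Λ and let λ₁, λ₂ ∈ L¹(Ω) satisfy Λ − b ≤ ‖λᵢ‖_{L¹} ≤ Λ + b for i = 1, 2. Then ‖G[λ₁] − G[λ₂]‖_∞ ≤ L_G · ‖λ₁ − λ₂‖_{L¹}, where L_G := (1/(σ−1))·F^{1/(σ−1)}·T_max^{σ}·T_min^{1−σ}·(Λ−b)^{σ/(1−σ)}. -/

import Mathlib

open MeasureTheory Real Set

/-- The price index operator `G[λ](x) = [(1/F) ∫_Ω |λ(y)| T(x,y)^{1-σ} dy]^{1/(1-σ)}`. -/
noncomputable def priceIndex {n : ℕ} (Ω : Set (Fin n → ℝ)) (F σ : ℝ)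
    (T : (Fin n → ℝ) → (Fin n → ℝ) → ℝ) (lam : (Fin n → ℝ) → ℝ)
    (x : Fin n → ℝ) : ℝ :=
  ((1 / F) * ∫ y in Ω, |lam y| * T x y ^ (1 - σ)) ^ (1 / (1 - σ))

/-- Sup norm of `f` over the region `Ω`. -/
noncomputable def supNormOn {n : ℕ} (Ω : Set (Fin n → ℝ)) (f : (Fin n → ℝ) → ℝ) : ℝ :=
  sSup ((fun x => |f x|) '' Ω)

lemma rpow_lip_aux {m q : ℝ} (hm : 0 < m) (hq : q < 0) :
    ∀ a ∈ Ici m, ∀ b ∈ Ici m, |a ^ q - b ^ q| ≤ (-q) * m ^ (q - 1) * |a - b| := by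
  intro a ha b hb
  have key := (convex_Ici m).norm_image_sub_le_of_norm_hasDerivWithin_le
    (f := fun t => t ^ q) (f' := fun t => q * t ^ (q - 1)) (C := (-q) * m ^ (q - 1))
    (fun t ht => (Real.hasDerivAt_rpow_const (Or.inl (by
      have : 0 < t := lt_of_lt_of_le hm ht; linarith))).hasDerivWithinAt)
    (fun t ht => by
      have ht' : 0 < t := lt_of_lt_of_le hm ht
      have h1 : t ^ (q - 1) ≤ m ^ (q - 1) :=
        Real.rpow_le_rpow_of_nonpos hm ht (by linarith)
      have h2 : (0:ℝ) ≤ t ^ (q - 1) := (Real.rpow_pos_of_pos ht' _).le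
      rw [Real.norm_eq_abs, abs_mul, abs_of_nonneg h2, abs_of_neg hq]
      exact mul_le_mul_of_nonneg_left h1 (by linarith))
    hb ha
  simpa [Real.norm_eq_abs] using key

theorem priceIndex_lipschitz {n : ℕ} (Ω : Set (Fin n → ℝ))
    (hΩc : IsCompact Ω) (hΩpos : 0 < volume Ω)
    (T : (Fin n → ℝ) → (Fin n → ℝ) → ℝ)
    (hTcont : ContinuousOn (fun p : (Fin n → ℝ) × (Fin n → ℝ) => T p.1 p.2) (Ω ×ˢ Ω))
    (Tmin Tmax : ℝ) (hTmin : 1 ≤ Tmin)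
    (hT : ∀ x ∈ Ω, ∀ y ∈ Ω, T x y ∈ Icc Tmin Tmax)
    (σ F Λ : ℝ) (hσ : 1 < σ) (hF : 0 < F) (hΛ : 0 < Λ)
    (b : ℝ) (hb : 0 < b) (hbΛ : b < Λ)
    (lam₁ lam₂ : (Fin n → ℝ) → ℝ)
    (hlam₁ : IntegrableOn lam₁ Ω) (hlam₂ : IntegrableOn lam₂ Ω)
    (h₁l : Λ - b ≤ ∫ x in Ω, |lam₁ x|) (h₁u : (∫ x in Ω, |lam₁ x|) ≤ Λ + b)
    (h₂l : Λ - b ≤ ∫ x in Ω, |lam₂ x|) (h₂u : (∫ x in Ω, |lam₂ x|) ≤ Λ + b) :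
    supNormOn Ω (fun x => priceIndex Ω F σ T lam₁ x - priceIndex Ω F σ T lam₂ x) ≤
      (1 / (σ - 1)) * F ^ (1 / (σ - 1)) * Tmax ^ σ * Tmin ^ (1 - σ) *
          (Λ - b) ^ (σ / (1 - σ)) *
        ∫ x in Ω, |lam₁ x - lam₂ x| := by
  have hΩm : MeasurableSet Ω := hΩc.measurableSet
  have hΩne : Ω.Nonempty := nonempty_of_measure_ne_zero hΩpos.ne'
  obtain ⟨x₀, hx₀⟩ := hΩne
  have hTmm : Tmin ≤ Tmax := le_trans (hT x₀ hx₀ x₀ hx₀).1 (hT x₀ hx₀ x₀ hx₀).2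
  have hTminpos : (0:ℝ) < Tmin := lt_of_lt_of_le one_pos hTmin
  have hTmaxpos : (0:ℝ) < Tmax := lt_of_lt_of_le hTminpos hTmm
  have hΛb : (0:ℝ) < Λ - b := by linarith
  have hp : 1 - σ < 0 := by linarith
  have hp' : (1:ℝ) - σ ≠ 0 := ne_of_lt hp
  have hq : 1 / (1 - σ) < 0 := div_neg_of_pos_of_neg one_pos hp
  set m : ℝ := (1 / F) * ((Λ - b) * Tmax ^ (1 - σ)) with hm_def
  have hm : 0 < m := by
    have := Real.rpow_pos_of_pos hTmaxpos (1 - σ); positivity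
  set D : ℝ := ∫ x in Ω, |lam₁ x - lam₂ x| with hD_def
  have hDnn : 0 ≤ D := integral_nonneg fun x => abs_nonneg _
  have hlamD : IntegrableOn (fun x => |lam₁ x - lam₂ x|) Ω := (hlam₁.sub hlam₂).abs
  set C : ℝ := (1 / (σ - 1)) * F ^ (1 / (σ - 1)) * Tmax ^ σ * Tmin ^ (1 - σ) *
      (Λ - b) ^ (σ / (1 - σ)) with hC_def
  have hσ1 : σ - 1 ≠ 0 := by linarith
  have hs1 : (0:ℝ) ≤ 1 / (σ - 1) := div_nonneg one_pos.le (by linarith)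
  have hCnn : 0 ≤ C := by
    have h1 := hs1
    have h2 := (Real.rpow_pos_of_pos hF (1 / (σ - 1))).le
    have h3 := (Real.rpow_pos_of_pos hTmaxpos σ).le
    have h4 := (Real.rpow_pos_of_pos hTminpos (1 - σ)).le
    have h5 := (Real.rpow_pos_of_pos hΛb (σ / (1 - σ))).le
    positivity
  -- key constant identity
  have hCeq : (1 / (σ - 1)) * m ^ (1 / (1 - σ) - 1) * ((1 / F) * Tmin ^ (1 - σ)) = C := by
    have hiF : (0:ℝ) < 1 / F := by positivity
    have hTm := Real.rpow_pos_of_pos hTmaxpos (1 - σ)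
    have h1 : 1 / (1 - σ) - 1 = σ / (1 - σ) := by field_simp; ring
    have hexp : (1 - σ) * (σ / (1 - σ)) = σ := by field_simp
    have h2 : m ^ (σ / (1 - σ)) =
        (1 / F) ^ (σ / (1 - σ)) * ((Λ - b) ^ (σ / (1 - σ)) * Tmax ^ σ) := by
      rw [hm_def, Real.mul_rpow hiF.le (by positivity), Real.mul_rpow hΛb.le hTm.le,
        ← Real.rpow_mul hTmaxpos.le, hexp]
    have hexp2 : -(σ / (1 - σ)) + -1 = 1 / (σ - 1) := by field_simp; ring
    have h3 : (1 / F) ^ (σ / (1 - σ)) * (1 / F) = F ^ (1 / (σ - 1)) := by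
      rw [one_div, Real.inv_rpow hF.le, ← Real.rpow_neg hF.le,
        (by rw [Real.rpow_neg_one] : F⁻¹ = F ^ (-1 : ℝ)), ← Real.rpow_add hF, hexp2]
    rw [h1, h2, hC_def]
    rw [← h3]
    ring
  -- pointwise bound
  have hmain : ∀ x ∈ Ω, |priceIndex Ω F σ T lam₁ x - priceIndex Ω F σ T lam₂ x| ≤ C * D := by
    intro x hx
    have hTcx : ContinuousOn (fun y => T x y) Ω :=
      hTcont.comp (continuous_const.prodMk continuous_id).continuousOn
        (fun y hy => ⟨hx, hy⟩)
    have hTpos : ∀ y ∈ Ω, 0 < T x y := fun y hy =>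
      lt_of_lt_of_le hTminpos (hT x hx y hy).1
    have hTpow : ContinuousOn (fun y => T x y ^ (1 - σ)) Ω :=
      hTcx.rpow_const fun y hy => Or.inl (hTpos y hy).ne'
    have hTpm : AEStronglyMeasurable (fun y => T x y ^ (1 - σ)) (volume.restrict Ω) :=
      hTpow.aestronglyMeasurable hΩm
    have hTbd : ∀ᵐ y ∂volume.restrict Ω, ‖T x y ^ (1 - σ)‖ ≤ 1 := by
      refine ae_restrict_of_forall_mem hΩm fun y hy => ?_
      rw [Real.norm_eq_abs, abs_of_nonneg (Real.rpow_nonneg (hTpos y hy).le _)]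
      exact Real.rpow_le_one_of_one_le_of_nonpos
        (le_trans hTmin (hT x hx y hy).1) hp.le
    have key : ∀ lam : (Fin n → ℝ) → ℝ, IntegrableOn lam Ω →
        IntegrableOn (fun y => |lam y| * T x y ^ (1 - σ)) Ω := by
      intro lam hlam
      have h := Integrable.bdd_mul (hlam.abs) hTpm hTbd
      exact h.congr (Filter.Eventually.of_forall fun y => mul_comm _ _)
    have hint₁ := key lam₁ hlam₁
    have hint₂ := key lam₂ hlam₂
    -- lower bound for I
    have hIge : ∀ lam : (Fin n → ℝ) → ℝ, IntegrableOn lam Ω →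
        (Λ - b ≤ ∫ y in Ω, |lam y|) →
        m ≤ (1 / F) * ∫ y in Ω, |lam y| * T x y ^ (1 - σ) := by
      intro lam hlam hl
      have hmono : (∫ y in Ω, |lam y| * Tmax ^ (1 - σ)) ≤
          ∫ y in Ω, |lam y| * T x y ^ (1 - σ) := by
        refine setIntegral_mono_on ((hlam.abs).mul_const _) (key lam hlam) hΩm
          fun y hy => ?_
        exact mul_le_mul_of_nonneg_left
          (Real.rpow_le_rpow_of_nonpos (hTpos y hy) (hT x hx y hy).2 hp.le)
          (abs_nonneg _)
      have heq : (∫ y in Ω, |lam y| * Tmax ^ (1 - σ)) =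
          (∫ y in Ω, |lam y|) * Tmax ^ (1 - σ) := integral_mul_const _ _
      have hTm := Real.rpow_pos_of_pos hTmaxpos (1 - σ)
      have : (Λ - b) * Tmax ^ (1 - σ) ≤ (∫ y in Ω, |lam y|) * Tmax ^ (1 - σ) :=
        mul_le_mul_of_nonneg_right hl hTm.le
      rw [hm_def]
      have h1F : (0:ℝ) ≤ 1 / F := by positivity
      refine mul_le_mul_of_nonneg_left ?_ h1F
      calc (Λ - b) * Tmax ^ (1 - σ) ≤ (∫ y in Ω, |lam y|) * Tmax ^ (1 - σ) := this
        _ = ∫ y in Ω, |lam y| * Tmax ^ (1 - σ) := heq.symm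
        _ ≤ _ := hmono
    have hI₁ := hIge lam₁ hlam₁ h₁l
    have hI₂ := hIge lam₂ hlam₂ h₂l
    set I₁ : ℝ := (1 / F) * ∫ y in Ω, |lam₁ y| * T x y ^ (1 - σ) with hI₁def
    set I₂ : ℝ := (1 / F) * ∫ y in Ω, |lam₂ y| * T x y ^ (1 - σ) with hI₂def
    -- difference bound
    have hdiff : |I₁ - I₂| ≤ (1 / F) * (Tmin ^ (1 - σ) * D) := by
      have hsub : (∫ y in Ω, |lam₁ y| * T x y ^ (1 - σ)) -
          (∫ y in Ω, |lam₂ y| * T x y ^ (1 - σ)) =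
          ∫ y in Ω, (|lam₁ y| - |lam₂ y|) * T x y ^ (1 - σ) := by
        rw [← integral_sub hint₁ hint₂]
        congr 1; funext y; ring
      have hgint : IntegrableOn (fun y => Tmin ^ (1 - σ) * |lam₁ y - lam₂ y|) Ω :=
        hlamD.const_mul _
      have hbound : ∀ᵐ y ∂volume.restrict Ω,
          ‖(|lam₁ y| - |lam₂ y|) * T x y ^ (1 - σ)‖ ≤
          Tmin ^ (1 - σ) * |lam₁ y - lam₂ y| := by
        refine ae_restrict_of_forall_mem hΩm fun y hy => ?_
        rw [Real.norm_eq_abs, abs_mul,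
          abs_of_nonneg (Real.rpow_nonneg (hTpos y hy).le _)]
        have h1 : |(|lam₁ y| - |lam₂ y|)| ≤ |lam₁ y - lam₂ y| := abs_abs_sub_abs_le_abs_sub _ _
        have h2 : T x y ^ (1 - σ) ≤ Tmin ^ (1 - σ) :=
          Real.rpow_le_rpow_of_nonpos hTminpos (hT x hx y hy).1 hp.le
        calc |(|lam₁ y| - |lam₂ y|)| * T x y ^ (1 - σ)
            ≤ |lam₁ y - lam₂ y| * Tmin ^ (1 - σ) :=
              mul_le_mul h1 h2 (Real.rpow_nonneg (hTpos y hy).le _) (abs_nonneg _)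
          _ = Tmin ^ (1 - σ) * |lam₁ y - lam₂ y| := mul_comm _ _
      have hnorm := norm_integral_le_of_norm_le hgint hbound
      rw [Real.norm_eq_abs] at hnorm
      have hgeq : (∫ y in Ω, Tmin ^ (1 - σ) * |lam₁ y - lam₂ y|) =
          Tmin ^ (1 - σ) * D := integral_const_mul _ _
      have h1F : (0:ℝ) ≤ 1 / F := by positivity
      rw [hI₁def, hI₂def, ← mul_sub, abs_mul, abs_of_nonneg h1F, hsub]
      exact mul_le_mul_of_nonneg_left (by rw [← hgeq]; exact hnorm) h1F
    -- apply the Lipschitz lemma for rpow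
    have hlip := rpow_lip_aux hm hq I₁ hI₁ I₂ hI₂
    have hGeq : priceIndex Ω F σ T lam₁ x - priceIndex Ω F σ T lam₂ x =
        I₁ ^ (1 / (1 - σ)) - I₂ ^ (1 / (1 - σ)) := rfl
    have hnegq : -(1 / (1 - σ)) = 1 / (σ - 1) := by
      field_simp; ring
    rw [hGeq]
    calc |I₁ ^ (1 / (1 - σ)) - I₂ ^ (1 / (1 - σ))|
        ≤ -(1 / (1 - σ)) * m ^ (1 / (1 - σ) - 1) * |I₁ - I₂| := hlip
      _ = (1 / (σ - 1)) * m ^ (1 / (1 - σ) - 1) * |I₁ - I₂| := by rw [hnegq]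
      _ ≤ (1 / (σ - 1)) * m ^ (1 / (1 - σ) - 1) * ((1 / F) * (Tmin ^ (1 - σ) * D)) := by
          exact mul_le_mul_of_nonneg_left hdiff
            (mul_nonneg hs1 (Real.rpow_pos_of_pos hm _).le)
      _ = ((1 / (σ - 1)) * m ^ (1 / (1 - σ) - 1) * ((1 / F) * Tmin ^ (1 - σ))) * D := by ring
      _ = C * D := by rw [hCeq]
  rw [supNormOn]
  refine Real.sSup_le ?_ (mul_nonneg hCnn hDnn)
  rintro z ⟨x, hx, rfl⟩
  exact hmain x hx
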